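/- If a locally compact second countable group G admits a weak Følner sequence, then G admits a strong Følner sequence. -/

import Mathlib

open MeasureTheory Filter Set Topology Pointwise

/-- If a locally compact second countable group admits a weak Følner
sequence, then it admits a strong Følner sequence. -/
lemma key_folner_lemma
    {G : Type*} [Group G] [TopologicalSpace G] [IsTopologicalGroup G]
    [LocallyCompactSpace G]
    [MeasurableSpace G] [BorelSpace G]
    (μ : Measure G)
    (F : ℕ → Set G)
    (hweak : ∀ K : Set G, IsCompact K →
        Tendsto (fun n => μ (symmDiff (F n) (K * F n)) / μ (F n)) atTop (𝓝 0))
    (K : Set G) (hK : IsCompact K) :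
    ∃ C : Set G, IsCompact C ∧ (1:G) ∈ C ∧
      Tendsto (fun n => μ ((K⁻¹ * (C * F n)) ∩ (K⁻¹ * (C * F n)ᶜ)) / μ (F n)) atTop (𝓝 0) := by
  obtain ⟨C, hC, hCmem⟩ := exists_compact_mem_nhds (1:G)
  have h1U : (1:G) ∈ interior C := mem_interior_iff_mem_nhds.mpr hCmem
  obtain ⟨W, hWo, hW1, hWW⟩ :=
    exists_open_nhds_one_mul_subset (isOpen_interior.mem_nhds h1U)
  obtain ⟨t, ht⟩ := hK.elim_nhds_subcover (fun k => W * {k})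
    (fun k _ => (hWo.mul_right).mem_nhds (by simpa using mul_mem_mul hW1 (mem_singleton k)))
  refine ⟨C, hC, interior_subset h1U, ?_⟩
  -- set containment
  have hsub : ∀ n, (K⁻¹ * (C * F n)) ∩ (K⁻¹ * (C * F n)ᶜ) ⊆
      symmDiff (F n) ((K⁻¹ * C) * F n) ∪ ⋃ k ∈ t, symmDiff (F n) ({k⁻¹} * F n) := by
    intro n x hx
    obtain ⟨hx1, hx2⟩ := hx
    by_cases hxF : x ∈ F n
    · right
      rw [Set.mem_mul] at hx2
      obtain ⟨a, ha, b, hb, hab⟩ := hx2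
      rw [Set.mem_inv] at ha
      have hbx : b = a⁻¹ * x := by rw [← hab]; group
      have hkK : a⁻¹ ∈ ⋃ k ∈ t, W * {k} := ht.2 ha
      rw [mem_iUnion₂] at hkK
      obtain ⟨ki, hki, hkmem⟩ := hkK
      rw [Set.mem_mul] at hkmem
      obtain ⟨w, hw, k', hk', hwk⟩ := hkmem
      rw [mem_singleton_iff] at hk'
      rw [hk'] at hwk
      -- claim: ki * x ∉ W * F n
      have hclaim : ki * x ∉ W * F n := by
        intro hmem
        rw [Set.mem_mul] at hmem
        obtain ⟨w', hw', f, hf, hwf⟩ := hmem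
        apply hb
        have : a⁻¹ * x = (w * w') * f := by
          rw [← hwk, mul_assoc, ← hwf, mul_assoc]
        have hmem2 : a⁻¹ * x ∈ interior C * F n := by
          rw [this]
          exact mul_mem_mul (hWW (mul_mem_mul hw hw')) hf
        rw [← hbx] at hmem2
        exact mul_subset_mul_right interior_subset hmem2
      rw [mem_iUnion₂]
      refine ⟨ki, hki, ?_⟩
      rw [mem_symmDiff]
      left
      refine ⟨hxF, fun hmem => ?_⟩
      rw [Set.mem_mul] at hmem
      obtain ⟨c, hc, f, hf, hcf⟩ := hmem
      rw [mem_singleton_iff] at hc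
      subst hc
      apply hclaim
      have : ki * x = f := by rw [← hcf]; group
      rw [this]
      exact ⟨1, hW1, f, hf, one_mul f⟩
    · left
      rw [mem_symmDiff]
      right
      rw [mul_assoc]
      exact ⟨hx1, hxF⟩
  -- squeeze
  have hbound : ∀ n, μ ((K⁻¹ * (C * F n)) ∩ (K⁻¹ * (C * F n)ᶜ)) / μ (F n) ≤
      μ (symmDiff (F n) ((K⁻¹ * C) * F n)) / μ (F n)
        + ∑ k ∈ t, μ (symmDiff (F n) ({k⁻¹} * F n)) / μ (F n) := by
    intro n
    have h1 : μ ((K⁻¹ * (C * F n)) ∩ (K⁻¹ * (C * F n)ᶜ)) ≤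
        μ (symmDiff (F n) ((K⁻¹ * C) * F n))
          + ∑ k ∈ t, μ (symmDiff (F n) ({k⁻¹} * F n)) := by
      refine (measure_mono (hsub n)).trans ?_
      refine (measure_union_le _ _).trans ?_
      exact add_le_add le_rfl (measure_biUnion_finset_le _ _)
    calc μ ((K⁻¹ * (C * F n)) ∩ (K⁻¹ * (C * F n)ᶜ)) / μ (F n)
        ≤ (μ (symmDiff (F n) ((K⁻¹ * C) * F n))
            + ∑ k ∈ t, μ (symmDiff (F n) ({k⁻¹} * F n))) / μ (F n) :=
          ENNReal.div_le_div h1 le_rfl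
      _ = _ := by
          simp only [div_eq_mul_inv, add_mul, Finset.sum_mul]
  have hlim : Tendsto (fun n => μ (symmDiff (F n) ((K⁻¹ * C) * F n)) / μ (F n)
        + ∑ k ∈ t, μ (symmDiff (F n) ({k⁻¹} * F n)) / μ (F n)) atTop (𝓝 0) := by
    have h1 := hweak _ (hK.inv.mul hC)
    have h2 : Tendsto (fun n => ∑ k ∈ t, μ (symmDiff (F n) ({k⁻¹} * F n)) / μ (F n))
        atTop (𝓝 0) := by
      have := tendsto_finset_sum t (fun k _ => hweak ({k⁻¹} : Set G) isCompact_singleton)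
      simpa using this
    simpa using h1.add h2
  exact tendsto_of_tendsto_of_tendsto_of_le_of_le tendsto_const_nhds hlim
    (fun n => zero_le) hbound


theorem exists_strong_folner_of_weak_folner
    {G : Type*} [Group G] [TopologicalSpace G] [IsTopologicalGroup G]
    [LocallyCompactSpace G] [SecondCountableTopology G]
    [MeasurableSpace G] [BorelSpace G]
    (μ : Measure G) [μ.IsHaarMeasure]
    (hweak : ∃ F : ℕ → Set G, (∀ n, IsCompact (F n)) ∧ (∀ n, 0 < μ (F n)) ∧
      ∀ K : Set G, IsCompact K →
        Tendsto (fun n => μ (symmDiff (F n) (K * F n)) / μ (F n)) atTop (𝓝 0)) :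
    ∃ F : ℕ → Set G, (∀ n, IsCompact (F n)) ∧ (∀ n, 0 < μ (F n)) ∧
      ∀ K : Set G, IsCompact K →
        Tendsto (fun n => μ ((K⁻¹ * F n) ∩ (K⁻¹ * (F n)ᶜ)) / μ (F n)) atTop (𝓝 0) := by
  
  obtain ⟨F, hFc, hFpos, hFweak⟩ := hweak
  set Q : CompactExhaustion G := CompactExhaustion.choice G with hQ
  have key := fun m : ℕ => key_folner_lemma μ F hFweak (Q m) (Q.isCompact m)
  choose C hCc hC1 hCt using key
  have hsel : ∀ m : ℕ, ∃ n,
      μ (((Q m)⁻¹ * (C m * F n)) ∩ ((Q m)⁻¹ * (C m * F n)ᶜ)) / μ (F n)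
        ≤ ((m : ENNReal) + 1)⁻¹ := by
    intro m
    have hpos : (0 : ENNReal) < ((m : ENNReal) + 1)⁻¹ :=
      ENNReal.inv_pos.mpr (ENNReal.add_ne_top.mpr ⟨ENNReal.natCast_ne_top m, ENNReal.one_ne_top⟩)
    exact ((ENNReal.tendsto_nhds_zero.mp (hCt m)) _ hpos).exists
  choose nn hnn using hsel
  refine ⟨fun m => C m * F (nn m), fun m => (hCc m).mul (hFc _),
    fun m => lt_of_lt_of_le (hFpos _)
      (measure_mono fun x hx => ⟨1, hC1 m, x, hx, one_mul x⟩), ?_⟩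
  intro K hK
  rw [ENNReal.tendsto_nhds_zero]
  intro ε hε
  obtain ⟨m₀, hm₀⟩ := Q.exists_superset_of_isCompact hK
  obtain ⟨j, hj⟩ := ENNReal.exists_inv_nat_lt hε.ne'
  filter_upwards [eventually_ge_atTop m₀, eventually_ge_atTop j] with m h1 h2
  have hKm : K ⊆ Q m := hm₀.trans (Q.subset h1)
  have hstep : μ ((K⁻¹ * (C m * F (nn m))) ∩ (K⁻¹ * (C m * F (nn m))ᶜ)) / μ (C m * F (nn m))
      ≤ μ (((Q m)⁻¹ * (C m * F (nn m))) ∩ ((Q m)⁻¹ * (C m * F (nn m))ᶜ)) / μ (F (nn m)) := by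
    refine ENNReal.div_le_div ?_ ?_
    · refine measure_mono (inter_subset_inter ?_ ?_) <;>
        exact mul_subset_mul_right (Set.inv_subset_inv.mpr hKm)
    · exact measure_mono fun x hx => ⟨1, hC1 m, x, hx, one_mul x⟩
  refine hstep.trans ((hnn m).trans ?_)
  have hjm : (j : ENNReal) ≤ (m : ENNReal) + 1 :=
    le_trans (Nat.cast_le.mpr h2) le_self_add
  exact (ENNReal.inv_le_inv' hjm).trans hj.le
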